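/- Let F be a field, M an n×n matrix over F, and I ⊆ {1,…,n} with complement J. Let Z₁ be the diagonal matrix with (Z₁)_{jj} = 1 for j ∈ J and (Z₁)_{ii} = 0 for i ∈ I, and Z₂ the diagonal matrix with (Z₂)_{ii} = 1 for i ∈ I and (Z₂)_{jj} = 0 for j ∈ J. Then there is a sign ε ∈ {1, −1} such that the determinant of the 2n×2n block matrix [[Z₁, Z₂],[M, λI]] equals ε · det(M_I) · λ^{|J|}, where M_I is the principal submatrix of M with rows and columns indexed by I and |J| is the cardinality of J. -/

import Mathlib

open Matrix Polynomial

/-- Let `M` be an `n × n` matrix over a field `F` and `I ⊆ {1, …, n}` with complement `J`.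
Let `Z₁` be the diagonal matrix with `(Z₁)ⱼⱼ = 1` for `j ∈ J` and `(Z₁)ᵢᵢ = 0` for `i ∈ I`,
and `Z₂` the diagonal matrix with `(Z₂)ᵢᵢ = 1` for `i ∈ I` and `(Z₂)ⱼⱼ = 0` for `j ∈ J`.
Then, for some sign `ε ∈ {1, -1}`, the determinant of the `2n × 2n` block matrix
`[[Z₁, Z₂], [M, λ I]]` equals `ε * det M_I * λ ^ |J|`, where `M_I` is the principal
submatrix of `M` with rows and columns indexed by `I`. -/
theorem det_fromBlocks_diagonal_indicator {F : Type*} [Field F] {n : ℕ}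
    (M : Matrix (Fin n) (Fin n) F) (I : Finset (Fin n)) :
    ∃ ε : F, (ε = 1 ∨ ε = -1) ∧
      (Matrix.fromBlocks
          ((Matrix.diagonal fun i : Fin n => if i ∈ I then (0 : F) else 1).map Polynomial.C)
          ((Matrix.diagonal fun i : Fin n => if i ∈ I then (1 : F) else 0).map Polynomial.C)
          (M.map Polynomial.C)
          ((Polynomial.X : Polynomial F) • 1)).det =
        Polynomial.C (ε * (M.submatrix (I.orderEmbOfFin rfl) (I.orderEmbOfFin rfl)).det) *
          Polynomial.X ^ (Iᶜ.card) := by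
  classical
  set R := Polynomial F with hR
  set A : Matrix (Fin n) (Fin n) R :=
    (Matrix.diagonal fun i : Fin n => if i ∈ I then (0 : F) else 1).map Polynomial.C with hA
  set B : Matrix (Fin n) (Fin n) R :=
    (Matrix.diagonal fun i : Fin n => if i ∈ I then (1 : F) else 0).map Polynomial.C with hB
  set Mc : Matrix (Fin n) (Fin n) R := M.map Polynomial.C with hMc
  have hA' : A = Matrix.diagonal (fun i => if i ∈ I then (0 : R) else 1) := by
    rw [hA, Matrix.diagonal_map (map_zero Polynomial.C)]
    funext i
    by_cases h : i ∈ I <;> simp [h]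
  have hB' : B = Matrix.diagonal (fun i => if i ∈ I then (1 : R) else 0) := by
    rw [hB, Matrix.diagonal_map (map_zero Polynomial.C)]
    funext i
    by_cases h : i ∈ I <;> simp [h]
  -- column operation identity
  have key : Matrix.fromBlocks A B Mc ((X : R) • 1) *
      Matrix.fromBlocks ((X : R) • (1 : Matrix (Fin n) (Fin n) R)) 0 (-Mc) 1 =
      Matrix.fromBlocks ((X : R) • A - B * Mc) B 0 ((X : R) • 1) := by
    simp [Matrix.fromBlocks_multiply, Matrix.mul_smul, Matrix.smul_mul, sub_eq_add_neg]
    rw [smul_neg, add_neg_cancel]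
  set N : Matrix (Fin n) (Fin n) R := (X : R) • A - B * Mc with hN
  have hdet : (Matrix.fromBlocks A B Mc ((X : R) • 1)).det = N.det := by
    have h1 := congrArg Matrix.det key
    rw [Matrix.det_mul, Matrix.det_fromBlocks_zero₁₂, Matrix.det_fromBlocks_zero₂₁,
      Matrix.det_smul, Matrix.det_one] at h1
    simp only [Fintype.card_fin, mul_one] at h1
    exact mul_right_cancel₀ (pow_ne_zero n Polynomial.X_ne_zero) h1
  -- reindex by the sum-compl equivalence
  set e : {x : Fin n // x ∈ I} ⊕ {x : Fin n // ¬ x ∈ I} ≃ Fin n := Equiv.sumCompl (· ∈ I) with he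
  have hsub : N.submatrix e e =
      Matrix.fromBlocks
        (-(Mc.submatrix (fun a : {x : Fin n // x ∈ I} => a.1) (fun a : {x : Fin n // x ∈ I} => a.1)))
        (-(Mc.submatrix (fun a : {x : Fin n // x ∈ I} => a.1) (fun a : {x : Fin n // ¬ x ∈ I} => a.1)))
        0 ((X : R) • 1) := by
    ext i j : 1
    have hent : ∀ i j : Fin n, N i j =
        if i ∈ I then -(Mc i j) else (if i = j then (X : R) else 0) := by
      intro i j
      rw [hN, hA', hB']
      by_cases h : i ∈ I <;>
        simp [Matrix.sub_apply, Matrix.smul_apply, Matrix.diagonal_mul, Matrix.diagonal_apply, h,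
          mul_ite]
          <;> simp [Matrix.mul_apply, Matrix.diagonal_apply, h]
    cases i <;> cases j <;>
      simp [Matrix.submatrix_apply, hent, Matrix.one_apply,
        Subtype.coe_prop] <;>
      try aesop
  have cardI : Fintype.card {x : Fin n // x ∈ I} = I.card := Fintype.card_coe I
  have cardJ : Fintype.card {x : Fin n // ¬ x ∈ I} = Iᶜ.card := by
    rw [Fintype.card_subtype_compl, cardI, Finset.card_compl]
  -- the submatrix determinant
  have hsubdet : (Mc.submatrix (fun a : {x : Fin n // x ∈ I} => a.1)
      (fun a : {x : Fin n // x ∈ I} => a.1)).det =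
      Polynomial.C ((M.submatrix (I.orderEmbOfFin rfl) (I.orderEmbOfFin rfl)).det) := by
    have h2 : Mc.submatrix (fun a : {x : Fin n // x ∈ I} => a.1)
        (fun a : {x : Fin n // x ∈ I} => a.1) =
        (M.submatrix (fun a : {x : Fin n // x ∈ I} => a.1)
          (fun a : {x : Fin n // x ∈ I} => a.1)).map Polynomial.C := rfl
    have h3 : M.submatrix (I.orderEmbOfFin rfl) (I.orderEmbOfFin rfl) =
        (M.submatrix (fun a : {x : Fin n // x ∈ I} => a.1)
          (fun a : {x : Fin n // x ∈ I} => a.1)).submatrix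
          (I.orderIsoOfFin rfl) (I.orderIsoOfFin rfl) := by
      ext i j
      simp [Matrix.submatrix_apply, Finset.coe_orderIsoOfFin_apply]
    rw [h2, h3]
    rw [show ((I.orderIsoOfFin rfl : Fin I.card → {x : Fin n // x ∈ I})) =
      ⇑(I.orderIsoOfFin rfl).toEquiv from rfl]
    rw [Matrix.det_submatrix_equiv_self]
    exact (RingHom.map_det Polynomial.C _).symm
  have hNdet : N.det = Polynomial.C ((-1 : F) ^ I.card *
      (M.submatrix (I.orderEmbOfFin rfl) (I.orderEmbOfFin rfl)).det) * X ^ (Iᶜ.card) := by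
    rw [← Matrix.det_submatrix_equiv_self e N, hsub, Matrix.det_fromBlocks_zero₂₁,
      Matrix.det_neg, hsubdet, Matrix.det_smul, Matrix.det_one, cardI, cardJ]
    rw [Polynomial.C_mul,
      show (Polynomial.C ((-1 : F) ^ I.card)) = ((-1 : R)) ^ I.card by
        rw [map_pow, map_neg, Polynomial.C_1]]
    ring
  refine ⟨(-1 : F) ^ I.card, ?_, ?_⟩
  · rcases Nat.even_or_odd I.card with h | h
    · exact Or.inl (h.neg_one_pow)
    · exact Or.inr (h.neg_one_pow)
  · rw [hdet, hNdet]
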